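/- The modified traffic rule conserves the number of ones (cars): for any configuration x : ZMod N → Fin 2, the number of sites in state one after applying the rule equals the number of sites in state one before. -/
import Mathlib


open Finset

/-- Number of sites in state one (cars) in a configuration. -/
def onesCount {N : ℕ} [NeZero N] (x : ZMod N → Fin 2) : ℕ :=
  (Finset.univ.filter (fun i => x i = 1)).card

/-- Number of ones in the window of `q` consecutive sites starting at `i`. -/
def wcount (q : ℕ) {N : ℕ} (x : ZMod N → Fin 2) (i : ZMod N) : ℕ :=
  ((Finset.range q).filter (fun j : ℕ => x (i + (j : ZMod N)) = 1)).card

/-- Moving condition of the modified traffic rule: the car at `i` may move right iff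
site `i+1` is empty and at most `p-1` of the `q-1` sites `i+1, …, i+q-1` are occupied. -/
abbrev canMove (p q : ℕ) {N : ℕ} (x : ZMod N → Fin 2) (i : ZMod N) : Prop :=
  x (i + 1) = 0 ∧
    ((Finset.range (q - 1)).filter (fun j : ℕ => x (i + 1 + (j : ZMod N)) = 1)).card ≤ p - 1

/-- One parallel update of the modified traffic rule. -/
def traffic (p q : ℕ) {N : ℕ} (x : ZMod N → Fin 2) : ZMod N → Fin 2 :=
  fun i =>
    if (x i = 1 ∧ ¬ canMove p q x i) ∨ (x (i - 1) = 1 ∧ canMove p q x (i - 1)) then 1 else 0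

/-- Number of ones among the `2q+1` sites `i-q, …, i+q`. -/
def nbhdCount (q : ℕ) {N : ℕ} (x : ZMod N → Fin 2) (i : ZMod N) : ℕ :=
  ((Finset.range (2 * q + 1)).filter (fun j : ℕ => x (i - (q : ZMod N) + (j : ZMod N)) = 1)).card

/-- One parallel update of the modified majority rule. -/
def majority (p q : ℕ) {N : ℕ} (x : ZMod N → Fin 2) : ZMod N → Fin 2 :=
  fun i => if 2 * p + 1 ≤ nbhdCount q x i then 1 else 0

/-- the modified traffic rule conserves the number of cars. -/
theorem traffic_conserves_ones {N : ℕ} [NeZero N] (p q : ℕ) (hp : 0 < p) (hpq : p < q)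
    (hco : Nat.Coprime p q) (x : ZMod N → Fin 2) :
    onesCount (traffic p q x) = onesCount x := by
  classical
  have hmem : ∀ i : ZMod N, (traffic p q x i = 1) ↔
      ((x i = 1 ∧ ¬ canMove p q x i) ∨ (x (i - 1) = 1 ∧ canMove p q x (i - 1))) := by
    intro i
    unfold traffic
    split <;> simp_all
  have h1 : onesCount (traffic p q x) =
      (univ.filter (fun i : ZMod N => (x i = 1 ∧ ¬ canMove p q x i) ∨
        (x (i - 1) = 1 ∧ canMove p q x (i - 1)))).card := by
    unfold onesCount
    congr 1
    apply filter_congr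
    intro i _
    simp [hmem i]
  rw [h1, filter_or, card_union_of_disjoint]
  · have h2 : (univ.filter (fun i : ZMod N => x (i - 1) = 1 ∧ canMove p q x (i - 1))).card
        = (univ.filter (fun i : ZMod N => x i = 1 ∧ canMove p q x i)).card := by
      apply Finset.card_bij (fun i _ => i - 1)
      · intro a ha
        simp only [mem_filter, mem_univ, true_and] at *
        exact ha
      · intro a _ b _ h
        have := congrArg (· + 1) h
        simpa using this
      · intro b hb
        refine ⟨b + 1, ?_, by simp⟩
        simp only [mem_filter, mem_univ, true_and, add_sub_cancel_right] at *
        exact hb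
    rw [h2]
    unfold onesCount
    rw [← card_union_of_disjoint, ← filter_or]
    · congr 1
      apply filter_congr
      intro i _
      tauto
    · rw [Finset.disjoint_left]
      intro i hi hi'
      simp only [mem_filter] at hi hi'
      exact hi.2.2 hi'.2.2
  · rw [Finset.disjoint_left]
    intro i hi hi'
    simp only [mem_filter] at hi hi'
    have h0 : x (i - 1 + 1) = 0 := hi'.2.2.1
    rw [sub_add_cancel] at h0
    rw [hi.2.1] at h0
    exact absurd h0 (by decide)
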